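/- The function s : ℝ → ℝ defined by s(v) = (−κ²·e^{−v√(κ²+1)/(√2κ)} + e^{v√(κ²+1)/(√2κ)} + 2κ²) / (2(κ²+1)) satisfies ds/dv = √(((1−s)² + (s/κ)²)/2), and moreover s(v_a) = 0 and s(v_b) = 1, where v_a = (√2κ/√(1+κ²))·log(κ√(1+κ²) − κ²) and v_b = (√2κ/√(1+κ²))·log(√(1+κ²)+1). -/

import Mathlib

open Real

/-- The adiabatic schedule `s(v)`. -/
noncomputable def schedule (κ v : ℝ) : ℝ :=
  (-κ ^ 2 * Real.exp (-v * (Real.sqrt (κ ^ 2 + 1) / (Real.sqrt 2 * κ))) +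
      Real.exp (v * (Real.sqrt (κ ^ 2 + 1) / (Real.sqrt 2 * κ))) + 2 * κ ^ 2) /
    (2 * (κ ^ 2 + 1))

/-- The schedule `s(v)` satisfies `ds/dv = √(((1−s)² + (s/κ)²)/2)`, and
`s(v_a) = 0`, `s(v_b) = 1` where
`v_a = (√2κ/√(1+κ²)) log(κ√(1+κ²) − κ²)` and `v_b = (√2κ/√(1+κ²)) log(√(1+κ²)+1)`. -/
theorem schedule_properties (κ : ℝ) (hκ : 1 < κ) :
    (∀ v : ℝ, HasDerivAt (schedule κ)
        (Real.sqrt (((1 - schedule κ v) ^ 2 + (schedule κ v / κ) ^ 2) / 2)) v) ∧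
    schedule κ (Real.sqrt 2 * κ / Real.sqrt (1 + κ ^ 2) *
        Real.log (κ * Real.sqrt (1 + κ ^ 2) - κ ^ 2)) = 0 ∧
    schedule κ (Real.sqrt 2 * κ / Real.sqrt (1 + κ ^ 2) *
        Real.log (Real.sqrt (1 + κ ^ 2) + 1)) = 1 := by
  have hκ0 : (0:ℝ) < κ := lt_trans one_pos hκ
  have hκ0' : κ ≠ 0 := ne_of_gt hκ0
  obtain ⟨c, hc⟩ : ∃ c, Real.sqrt (κ ^ 2 + 1) = c := ⟨_, rfl⟩
  have hc0 : 0 < c := hc ▸ Real.sqrt_pos.mpr (by positivity)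
  have hc0' : c ≠ 0 := ne_of_gt hc0
  have hc2 : c ^ 2 = κ ^ 2 + 1 := by rw [← hc]; exact Real.sq_sqrt (by positivity)
  obtain ⟨t, ht⟩ : ∃ t, Real.sqrt 2 = t := ⟨_, rfl⟩
  have ht0 : 0 < t := ht ▸ Real.sqrt_pos.mpr (by norm_num)
  have ht0' : t ≠ 0 := ne_of_gt ht0
  have ht2 : t ^ 2 = 2 := by rw [← ht]; exact Real.sq_sqrt (by norm_num)
  have hsq : Real.sqrt (1 + κ ^ 2) = c := by rw [← hc, add_comm]
  have hck : κ < c := by nlinarith [hc2, hc0]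
  have hden : (2:ℝ) * (κ ^ 2 + 1) ≠ 0 := by positivity
  set a := c / (t * κ) with ha
  have ha0 : 0 < a := by positivity
  refine ⟨?_, ?_, ?_⟩
  · intro v
    have h1 : HasDerivAt (fun v : ℝ => -v * a) (-a) v := by
      simpa using (hasDerivAt_id v).neg.mul_const a
    have h2 : HasDerivAt (fun v : ℝ => v * a) a v := by
      simpa using (hasDerivAt_id v).mul_const a
    have hD : HasDerivAt (schedule κ)
        (a * (κ ^ 2 * Real.exp (-v * a) + Real.exp (v * a)) / (2 * (κ ^ 2 + 1))) v := by
      have h4 := (((h1.exp.const_mul (-κ ^ 2)).add h2.exp).add_const (2 * κ ^ 2)).div_const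
        (2 * (κ ^ 2 + 1))
      have heq : schedule κ = fun v : ℝ =>
          (-κ ^ 2 * Real.exp (-v * a) + Real.exp (v * a) + 2 * κ ^ 2) / (2 * (κ ^ 2 + 1)) := by
        funext w; rw [schedule, hc, ht]
      rw [heq]
      exact h4.congr_deriv (by ring)
    convert hD using 1
    obtain ⟨x, hx⟩ : ∃ x, Real.exp (v * a) = x := ⟨_, rfl⟩
    have hx0 : 0 < x := hx ▸ Real.exp_pos _
    have hx0' : x ≠ 0 := ne_of_gt hx0
    have hy : Real.exp (-v * a) = x⁻¹ := by rw [neg_mul, Real.exp_neg, hx]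
    have hs : schedule κ v = (-κ ^ 2 * x⁻¹ + x + 2 * κ ^ 2) / (2 * (κ ^ 2 + 1)) := by
      rw [schedule, hc, ht, ← ha, hy, hx]
    have hR0 : (0:ℝ) ≤ a * (κ ^ 2 * x⁻¹ + x) / (2 * (κ ^ 2 + 1)) := by positivity
    have key : ((1 - (-κ ^ 2 * x⁻¹ + x + 2 * κ ^ 2) / (2 * (κ ^ 2 + 1))) ^ 2 +
        ((-κ ^ 2 * x⁻¹ + x + 2 * κ ^ 2) / (2 * (κ ^ 2 + 1)) / κ) ^ 2) / 2 =
        (c / (t * κ) * (κ ^ 2 * x⁻¹ + x) / (2 * (κ ^ 2 + 1))) ^ 2 := by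
      have expand : (c / (t * κ) * (κ ^ 2 * x⁻¹ + x) / (2 * (κ ^ 2 + 1))) ^ 2 =
          c ^ 2 / t ^ 2 / κ ^ 2 * (κ ^ 2 * x⁻¹ + x) ^ 2 / (2 * (κ ^ 2 + 1)) /
            (2 * (κ ^ 2 + 1)) := by
        ring
      rw [expand, hc2, ht2]
      have h1' : (κ:ℝ) ^ 2 + 1 ≠ 0 := by positivity
      field_simp
      ring
    rw [hs, hy, hx, ha, key, Real.sqrt_sq (ha ▸ hR0)]
  · have hpos : 0 < κ * c - κ ^ 2 := by nlinarith [hck, hκ0]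
    have harg : t * κ / c * Real.log (κ * c - κ ^ 2) * a =
        Real.log (κ * c - κ ^ 2) := by
      rw [ha]; field_simp
    have harg' : -(t * κ / c * Real.log (κ * c - κ ^ 2)) * a =
        -Real.log (κ * c - κ ^ 2) := by
      rw [neg_mul, harg]
    rw [schedule, hc, ht, hsq, ← ha, harg', harg, Real.exp_neg, Real.exp_log hpos]
    rw [div_eq_zero_iff]
    left
    field_simp
    have hne : c - κ ≠ 0 := sub_ne_zero.mpr (ne_of_gt hck)
    rw [show (-1 + (c - κ) ^ 2) = -2 * κ * (c - κ) by linear_combination hc2, mul_div_assoc,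
      div_self hne]
    ring
  · have hpos : (0:ℝ) < c + 1 := by positivity
    have harg : t * κ / c * Real.log (c + 1) * a = Real.log (c + 1) := by
      rw [ha]; field_simp
    have harg' : -(t * κ / c * Real.log (c + 1)) * a = -Real.log (c + 1) := by
      rw [neg_mul, harg]
    rw [schedule, hc, ht, hsq, ← ha, harg', harg, Real.exp_neg, Real.exp_log hpos]
    rw [div_eq_one_iff_eq (by positivity)]
    field_simp
    nlinarith [hc2]
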